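/- Soundness of the abstract pushdown CESK machine: if ς ↦ ς' in the concrete CEK machine and α(ς) ⊑ ŝ, then there exists ŝ' with ŝ ↦ ŝ' in the abstract pushdown CESK machine and α(ς') ⊑ ŝ', where the continuation components of ς and ŝ have exactly corresponding frame structure (the stack is not abstracted). -/
import Mathlib


/- Statement 14: soundness of the abstract pushdown CESK machine with
   respect to the concrete CEK machine; the continuation components have
   exactly corresponding frame structure (the stack is not abstracted). -/

inductive Exp : Type
  | ref : String → Exp
  | lam : String → Exp → Exp
  | app : Exp → Exp → Exp
deriving DecidableEq

/- The concrete CEK machine. -/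

mutual
  inductive CEnv : Type
    | mk : List (String × CClo) → CEnv
  inductive CClo : Type
    | mk : Exp → CEnv → CClo
end

def CEnv.lookup : CEnv → String → Option CClo
  | .mk l, x => l.lookup x

def CEnv.ext : CEnv → String → CClo → CEnv
  | .mk l, x, c => .mk ((x, c) :: l)

inductive CKont : Type
  | mt
  | ar (e : Exp) (ρ : CEnv) (κ : CKont)
  | fn (v : Exp) (ρ : CEnv) (κ : CKont)

abbrev CEKState := Exp × CEnv × CKont

inductive CEKStep : CEKState → CEKState → Prop
  | var {x ρ κ v ρ'} :
      CEnv.lookup ρ x = some (CClo.mk v ρ') →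
      CEKStep (.ref x, ρ, κ) (v, ρ', κ)
  | app {e₀ e₁ ρ κ} :
      CEKStep (.app e₀ e₁, ρ, κ) (e₀, ρ, .ar e₁ ρ κ)
  | arg {x e ρ e' ρ' κ} :
      CEKStep (.lam x e, ρ, .ar e' ρ' κ) (e', ρ', .fn (.lam x e) ρ κ)
  | beta {x e ρ y e' ρ' κ} :
      CEKStep (.lam x e, ρ, .fn (.lam y e') ρ' κ)
        (e', CEnv.ext ρ' y (CClo.mk (.lam x e) ρ), κ)

/- The abstract pushdown CESK machine: bindings are store-allocated into a
   finite abstract store, continuations remain an unbounded inductive stack. -/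

section Abstract

variable (AAddr : Type)

abbrev AEnv := List (String × AAddr)
abbrev AClo := Exp × AEnv AAddr

/-- Abstract stores map addresses to sets of closures. -/
abbrev AStore := AAddr → Set (AClo AAddr)

inductive AKont : Type
  | mt
  | ar (e : Exp) (ρ : AEnv AAddr) (κ : AKont)
  | fn (v : Exp) (ρ : AEnv AAddr) (κ : AKont)

abbrev AState := Exp × AEnv AAddr × AStore AAddr × AKont AAddr

end Abstract

def joinStore {AAddr : Type} [DecidableEq AAddr]
    (σ : AStore AAddr) (a : AAddr) (c : AClo AAddr) : AStore AAddr :=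
  fun b => if b = a then insert c (σ b) else σ b

inductive AStep {AAddr : Type} [DecidableEq AAddr]
    (aalloc : AState AAddr → AAddr) : AState AAddr → AState AAddr → Prop
  | var {x ρ σ κ a v ρ'} :
      List.lookup x ρ = some a → (v, ρ') ∈ σ a →
      AStep aalloc (.ref x, ρ, σ, κ) (v, ρ', σ, κ)
  | app {e₀ e₁ ρ σ κ} :
      AStep aalloc (.app e₀ e₁, ρ, σ, κ) (e₀, ρ, σ, .ar e₁ ρ κ)
  | arg {x e ρ σ e' ρ' κ} :
      AStep aalloc (.lam x e, ρ, σ, .ar e' ρ' κ)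
        (e', ρ', σ, .fn (.lam x e) ρ κ)
  | beta {x e ρ σ y e' ρ' κ} :
      AStep aalloc (.lam x e, ρ, σ, .fn (.lam y e') ρ' κ)
        (e', (y, aalloc (.lam x e, ρ, σ, .fn (.lam y e') ρ' κ)) :: ρ',
         joinStore σ (aalloc (.lam x e, ρ, σ, .fn (.lam y e') ρ' κ))
           (Exp.lam x e, ρ),
         κ)

/- The abstraction: CEK substitution-environments map through the
   binding-store abstraction; continuations map frame-by-frame. -/

mutual
  /-- α(ρ) ⊑-approximated by ρ̂ relative to the abstract store. -/
  inductive EnvAbs {AAddr : Type} (σ : AStore AAddr) : CEnv → AEnv AAddr → Prop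
    | nil : EnvAbs σ (.mk []) []
    | cons {x c l ρA v ρA' a} :
        CloAbs σ c (v, ρA') → (v, ρA') ∈ σ a →
        EnvAbs σ (.mk l) ρA →
        EnvAbs σ (.mk ((x, c) :: l)) ((x, a) :: ρA)
  /-- α of a closure relative to the abstract store. -/
  inductive CloAbs {AAddr : Type} (σ : AStore AAddr) : CClo → AClo AAddr → Prop
    | mk {v ρ ρA} : EnvAbs σ ρ ρA → CloAbs σ (.mk v ρ) (v, ρA)
end

/-- Continuations correspond frame-by-frame: the stack is not abstracted. -/
inductive KontAbs {AAddr : Type} (σ : AStore AAddr) : CKont → AKont AAddr → Prop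
  | mt : KontAbs σ .mt .mt
  | ar {e ρ ρA κ κA} :
      EnvAbs σ ρ ρA → KontAbs σ κ κA →
      KontAbs σ (.ar e ρ κ) (.ar e ρA κA)
  | fn {v ρ ρA κ κA} :
      EnvAbs σ ρ ρA → KontAbs σ κ κA →
      KontAbs σ (.fn v ρ κ) (.fn v ρA κA)

/-- `Approx ς ŝ` : α(ς) ⊑ ŝ. -/
def Approx {AAddr : Type} : CEKState → AState AAddr → Prop
  | (e, ρ, κ), (e', ρA, σ, κA) =>
      e = e' ∧ EnvAbs σ ρ ρA ∧ KontAbs σ κ κA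

theorem envAbs_mono {AAddr : Type} {σ σ' : AStore AAddr}
    (h : ∀ a, σ a ⊆ σ' a) :
    ∀ {ρ ρA}, EnvAbs σ ρ ρA → EnvAbs σ' ρ ρA := fun henv =>
  EnvAbs.rec (motive_1 := fun ρ ρA _ => EnvAbs σ' ρ ρA)
    (motive_2 := fun c cA _ => CloAbs σ' c cA)
    .nil
    (fun _ hmem _ ihc ihe => .cons ihc (h _ hmem) ihe)
    (fun _ ihe => .mk ihe)
    henv

theorem kontAbs_mono {AAddr : Type} {σ σ' : AStore AAddr}
    (h : ∀ a, σ a ⊆ σ' a) {κ κA} (hk : KontAbs σ κ κA) :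
    KontAbs σ' κ κA := by
  induction hk with
  | mt => exact .mt
  | ar he _ ih => exact .ar (envAbs_mono h he) ih
  | fn he _ ih => exact .fn (envAbs_mono h he) ih

theorem joinStore_sub {AAddr : Type} [DecidableEq AAddr]
    (σ : AStore AAddr) (a : AAddr) (c : AClo AAddr) :
    ∀ b, σ b ⊆ joinStore σ a c b := by
  intro b x hx
  unfold joinStore
  split
  · exact Set.mem_insert_of_mem _ hx
  · exact hx

theorem envAbs_lookup {AAddr : Type} {σ : AStore AAddr} {ρ ρA x c}
    (he : EnvAbs σ ρ ρA) (h : CEnv.lookup ρ x = some c) :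
    ∃ a v ρ', List.lookup x ρA = some a ∧ (v, ρ') ∈ σ a ∧
      CloAbs σ c (v, ρ') := by
  induction ρA generalizing ρ c with
  | nil =>
    cases he
    simp [CEnv.lookup] at h
  | cons p rest ih =>
    cases he with
    | @cons y c' l _ v ρ' a hc hmem he' =>
      simp only [CEnv.lookup, List.lookup] at h ⊢
      by_cases hxy : x = y
      · subst hxy
        simp at h ⊢
        exact ⟨v, ρ', hmem, h ▸ hc⟩
      · simp [hxy, beq_false_of_ne hxy] at h ⊢
        obtain ⟨a', v', r', h1, h2, h3⟩ := ih he' h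
        exact ⟨a', h1, v', r', h2, h3⟩

theorem pushdown_cesk_sound {AAddr : Type} [DecidableEq AAddr]
    (aalloc : AState AAddr → AAddr)
    (ς ς' : CEKState) (sh : AState AAddr)
    (hstep : CEKStep ς ς') (happrox : Approx ς sh) :
    ∃ sh' : AState AAddr, AStep aalloc sh sh' ∧ Approx ς' sh' := by
  obtain ⟨e', ρA, σ, κA⟩ := sh
  obtain ⟨he, henv, hkont⟩ := happrox
  subst he
  cases hstep with
  | @var x ρ κ v ρ' hlook =>
    obtain ⟨a, w, ρA', hla, hmem, hclo⟩ := envAbs_lookup henv hlook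
    cases hclo with
    | mk he' =>
      exact ⟨(v, ρA', σ, κA), .var hla hmem, rfl, he', hkont⟩
  | app => exact ⟨_, .app, rfl, henv, .ar henv hkont⟩
  | arg =>
    cases hkont with
    | ar he' hk' => exact ⟨_, .arg, rfl, he', .fn henv hk'⟩
  | @beta x e ρ y e' ρ' κ =>
    cases hkont with
    | @fn _ _ ρA' _ κA' he' hk' =>
      obtain ⟨l⟩ := ρ'
      simp only [CEnv.ext]
      refine ⟨_, .beta, rfl, ?_, ?_⟩
      · set a := aalloc (.lam x e, ρA, σ, .fn (.lam y e') ρA' κA')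
        have hsub := joinStore_sub σ a (Exp.lam x e, ρA)
        refine EnvAbs.cons (v := Exp.lam x e) (ρA' := ρA) (a := a)
          (.mk (envAbs_mono hsub henv)) ?_ (envAbs_mono hsub he')
        simp [joinStore]
      · exact kontAbs_mono (joinStore_sub σ _ _) hk'
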